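/- Fix a prime power q. Suppose that every finite simple graph containing no K_{q+2} minor has chromatic number at most q + 1 (the Hadwiger Conjecture for q + 2). Then every 2-minimal acyclic multicast network whose underlying topology is K_{q+2}-minor-free admits a rate-2 linear coding solution over the finite field F_q. -/

import Mathlib

namespace NCMinor

variable {V A : Type}

/-- `IsArcWalk tl hd u v p` : the list of arcs `p` forms a directed walk from `u` to `v`
in the multigraph with tail map `tl` and head map `hd`. -/
def IsArcWalk (tl hd : A → V) : V → V → List A → Prop
  | u, v, [] => u = v
  | u, v, a :: p => tl a = u ∧ IsArcWalk tl hd (hd a) v p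

/-- `lam tl hd s v` : the maximum number of pairwise arc-disjoint directed paths
from `s` to `v`. -/
noncomputable def lam (tl hd : A → V) (s v : V) : ℕ :=
  sSup {k | ∃ P : Fin k → List A,
    (∀ i, IsArcWalk tl hd s v (P i)) ∧
    ∀ i j : Fin k, i ≠ j → ∀ a, a ∈ P i → a ∉ P j}

/-- in-degree -/
noncomputable def inDeg (hd : A → V) (v : V) : ℕ := {a | hd a = v}.ncard

/-- `cutVal tl hd U` : number of arcs entering the node set `U` from outside. -/
noncomputable def cutVal (tl hd : A → V) (U : Set V) : ℕ :=
  {a | tl a ∉ U ∧ hd a ∈ U}.ncard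

/-- `eta tl hd s u v` : minimum value of a cut separating `{u, v}` from `s`. -/
noncomputable def eta (tl hd : A → V) (s u v : V) : ℕ :=
  sInf {k | ∃ U : Set V, u ∈ U ∧ v ∈ U ∧ s ∉ U ∧ cutVal tl hd U = k}

def Acyclic (tl hd : A → V) : Prop := ∀ v p, IsArcWalk tl hd v v p → p = []

/-- deleting any arc decreases the max-flow to some node. -/
def LinkMinimal (tl hd : A → V) (s : V) : Prop :=
  ∀ a : A, ∃ v : V,
    lam (fun b : {b : A // b ≠ a} => tl b.1) (fun b => hd b.1) s v < lam tl hd s v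

/-- rate 2 is feasible to every receiver, but infeasible after deleting any arc. -/
def TwoMinimal (tl hd : A → V) (s : V) (T : Set V) : Prop :=
  (∀ t ∈ T, 2 ≤ lam tl hd s t) ∧
  ∀ a : A, ∃ t ∈ T,
    lam (fun b : {b : A // b ≠ a} => tl b.1) (fun b => hd b.1) s t < 2

/-- a rate-2 linear coding solution over the field `F`. -/
def IsCodingSolution (tl hd : A → V) (s : V) (T : Set V) {F : Type} [Field F]
    (φ : A → F × F) : Prop :=
  (∀ a, φ a ≠ 0) ∧
  (∀ a, tl a ≠ s → φ a ∈ Submodule.span F (φ '' {b | hd b = tl a})) ∧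
  (∀ t ∈ T, Submodule.span F (φ '' {b | hd b = t}) = ⊤)

/-- generating relation of the subtree decomposition: consecutive arcs through an
in-degree-1 node lie in the same class. -/
def SubtreeRel (tl hd : A → V) (a b : A) : Prop :=
  hd a = tl b ∧ inDeg hd (hd a) = 1

/-- the subtrees: classes of arcs generated by `SubtreeRel`. -/
def Subtrees (tl hd : A → V) : Type := Quot (SubtreeRel tl hd)

/-- the subtree graph: two subtrees are adjacent iff some node of in-degree 2 has one
incoming arc in each. -/
def subtreeGraph (tl hd : A → V) : SimpleGraph (Subtrees tl hd) where
  Adj x y := x ≠ y ∧ ∃ a b : A,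
    Quot.mk _ a = x ∧ Quot.mk _ b = y ∧ hd a = hd b ∧ inDeg hd (hd a) = 2
  symm := by
    constructor
    rintro x y ⟨hxy, a, b, ha, hb, hab, hdeg⟩
    exact ⟨hxy.symm, b, a, hb, ha, hab.symm, hab ▸ hdeg⟩
  loopless := by constructor; rintro x ⟨hxx, -⟩; exact hxx rfl

/-- the underlying (undirected, simple) topology of the network. -/
def topology (tl hd : A → V) : SimpleGraph V where
  Adj u v := u ≠ v ∧ ∃ a, (tl a = u ∧ hd a = v) ∨ (tl a = v ∧ hd a = u)
  symm := by constructor; rintro u v ⟨huv, a, h⟩; exact ⟨huv.symm, a, h.symm⟩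
  loopless := by constructor; rintro u ⟨h, -⟩; exact h rfl

/-- graph minor via branch sets. -/
def IsMinor {W : Type} (M : SimpleGraph W) (G : SimpleGraph V) : Prop :=
  ∃ B : W → Set V,
    (∀ m, (G.induce (B m)).Connected) ∧
    (Pairwise fun m m' => Disjoint (B m) (B m')) ∧
    ∀ m m', M.Adj m m' → ∃ u ∈ B m, ∃ v ∈ B m', G.Adj u v

/-- `S` is the arc set of an `s`-rooted out-tree. -/
def IsOutTree (tl hd : A → V) (s : V) (S : Set A) : Prop :=
  (∀ a ∈ S, hd a ≠ s) ∧
  Set.InjOn hd S ∧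
  ∀ a ∈ S, ∃ p : List A, (∀ b ∈ p, b ∈ S) ∧ IsArcWalk tl hd s (tl a) p

/-- node `v` belongs to the out-tree with root `s` and arc set `S`. -/
def MemTree (tl hd : A → V) (s : V) (S : Set A) (v : V) : Prop :=
  v = s ∨ ∃ a ∈ S, hd a = v ∨ tl a = v

/-- tree decomposition of the graph `G` with host tree `H` and bags `B`. -/
structure IsTreeDecomp (G : SimpleGraph V) {X : Type} (H : SimpleGraph X)
    (B : X → Set V) : Prop where
  isTree : H.IsTree
  mem_bag : ∀ v, ∃ x, v ∈ B x
  edge_bag : ∀ u v, G.Adj u v → ∃ x, u ∈ B x ∧ v ∈ B x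
  bag_connected : ∀ v : V, (H.induce {x | v ∈ B x}).Connected

/-- size of a largest clique. -/
noncomputable def cliqueNumber {W : Type} (G : SimpleGraph W) : ℕ :=
  sSup {n | ∃ t : Finset W, G.IsNClique n t}

end NCMinor
namespace NCMinor

variable {V A : Type}

section Walks

variable (tl hd : A → V)

lemma isArcWalk_nil {u v : V} : IsArcWalk tl hd u v ([] : List A) ↔ u = v := Iff.rfl

lemma isArcWalk_cons {u v : V} {a : A} {p : List A} :
    IsArcWalk tl hd u v (a :: p) ↔ tl a = u ∧ IsArcWalk tl hd (hd a) v p := Iff.rfl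

lemma isArcWalk_append {u v : V} (p q : List A) :
    IsArcWalk tl hd u v (p ++ q) ↔ ∃ w, IsArcWalk tl hd u w p ∧ IsArcWalk tl hd w v q := by
  induction p generalizing u with
  | nil =>
    constructor
    · intro h; exact ⟨u, rfl, h⟩
    · rintro ⟨w, rfl, h⟩; exact h
  | cons a p ih =>
    simp only [List.cons_append, isArcWalk_cons, ih]
    constructor
    · rintro ⟨h1, w, h2, h3⟩; exact ⟨w, ⟨h1, h2⟩, h3⟩
    · rintro ⟨w, ⟨h1, h2⟩, h3⟩; exact ⟨h1, w, h2, h3⟩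

lemma isArcWalk_append_of {u w v : V} {p q : List A}
    (h1 : IsArcWalk tl hd u w p) (h2 : IsArcWalk tl hd w v q) :
    IsArcWalk tl hd u v (p ++ q) :=
  (isArcWalk_append tl hd p q).2 ⟨w, h1, h2⟩

/-- split a walk at an occurrence of an arc. -/
lemma isArcWalk_mem_split {u v : V} {p : List A} {a : A}
    (hw : IsArcWalk tl hd u v p) (ha : a ∈ p) :
    ∃ X Y, p = X ++ a :: Y ∧ IsArcWalk tl hd u (tl a) X ∧ IsArcWalk tl hd (hd a) v Y := by
  obtain ⟨X, Y, rfl⟩ := List.append_of_mem ha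
  obtain ⟨w, h1, h2⟩ := (isArcWalk_append tl hd X (a :: Y)).1 hw
  obtain ⟨h3, h4⟩ := h2
  subst h3
  exact ⟨X, Y, rfl, h1, h4⟩

variable {tl hd}

lemma walk_arc_not_mem_right (hacyc : Acyclic tl hd) {u v : V} {a : A} {X Y : List A}
    (hw : IsArcWalk tl hd u v (X ++ a :: Y)) : a ∉ Y := by
  intro haY
  obtain ⟨w, h1, h2⟩ := (isArcWalk_append tl hd X (a :: Y)).1 hw
  obtain ⟨h3, h4⟩ := h2
  obtain ⟨Y1, Y2, rfl, h5, h6⟩ := isArcWalk_mem_split tl hd h4 haY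
  have : IsArcWalk tl hd (tl a) (tl a) (a :: Y1) := ⟨rfl, h5⟩
  exact (List.cons_ne_nil a Y1) (hacyc _ _ this)

lemma walk_arc_not_mem_left (hacyc : Acyclic tl hd) {u v : V} {a : A} {X Y : List A}
    (hw : IsArcWalk tl hd u v (X ++ a :: Y)) : a ∉ X := by
  intro haX
  obtain ⟨X1, X2, rfl⟩ := List.append_of_mem haX
  have : (X1 ++ a :: X2) ++ a :: Y = X1 ++ a :: (X2 ++ a :: Y) := by simp
  rw [this] at hw
  exact walk_arc_not_mem_right hacyc hw (by simp)

lemma no_self_loop (hacyc : Acyclic tl hd) (a : A) : tl a ≠ hd a := by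
  intro h
  have : IsArcWalk tl hd (tl a) (tl a) [a] := ⟨rfl, h.symm⟩
  exact (List.cons_ne_nil a []) (hacyc _ _ this)

/-- the immediate-precedence relation on arcs is well-founded in an acyclic network. -/
lemma arcLt_wf [Finite A] (hacyc : Acyclic tl hd) :
    WellFounded (fun a b : A => hd a = tl b) := by
  have key : ∀ a b : A, Relation.TransGen (fun a b : A => hd a = tl b) a b →
      ∃ p, IsArcWalk tl hd (tl a) (tl b) (a :: p) := by
    intro a b h
    induction h with
    | single h => exact ⟨[], ⟨rfl, h⟩⟩
    | @tail b' c' h1 h2 ih =>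
      obtain ⟨p, hp⟩ := ih
      refine ⟨p ++ [b'], ?_⟩
      have : IsArcWalk tl hd (tl b') (tl c') [b'] := ⟨rfl, h2⟩
      have := isArcWalk_append_of tl hd hp this
      simpa using this
  have : IsIrrefl A (Relation.TransGen (fun a b : A => hd a = tl b)) := by
    constructor
    intro a h
    obtain ⟨p, hp⟩ := key a a h
    exact (List.cons_ne_nil a p) (hacyc _ _ hp)
  have wf : WellFounded (Relation.TransGen (fun a b : A => hd a = tl b)) :=
    Finite.wellFounded_of_trans_of_irrefl _
  exact @Subrelation.wf A (Relation.TransGen (fun a b : A => hd a = tl b))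
    (fun a b : A => hd a = tl b) (fun h => Relation.TransGen.single h) wf

end Walks

end NCMinor
namespace NCMinor

variable {V A : Type}

section Lam

variable {B : Type} (tl hd : B → V)

/-- the defining set of `lam` is bounded when `s ≠ v`. -/
lemma lam_bddAbove [Finite B] {s v : V} (hsv : s ≠ v) :
    BddAbove {k | ∃ P : Fin k → List B,
      (∀ i, IsArcWalk tl hd s v (P i)) ∧
      ∀ i j : Fin k, i ≠ j → ∀ a, a ∈ P i → a ∉ P j} := by
  refine ⟨Nat.card B, ?_⟩
  rintro k ⟨P, hP, hdisj⟩
  have hne : ∀ i, P i ≠ [] := by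
    intro i h
    have := hP i
    rw [h] at this
    exact hsv this
  have hinj : Function.Injective (fun i : Fin k => (P i).head (hne i)) := by
    intro i j hij
    by_contra hne2
    have h1 : (P i).head (hne i) ∈ P i := List.head_mem _
    have h2 : (P j).head (hne j) ∈ P j := List.head_mem _
    have hij' : (P i).head (hne i) = (P j).head (hne j) := hij
    exact hdisj i j hne2 _ h1 (hij' ▸ h2)
  simpa using Nat.card_le_card_of_injective _ hinj

/-- two arc-disjoint walks give `2 ≤ lam`. -/
lemma two_le_lam [Finite B] {s v : V} (hsv : s ≠ v) (P Q : List B)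
    (hP : IsArcWalk tl hd s v P) (hQ : IsArcWalk tl hd s v Q)
    (hPQ : ∀ a ∈ P, a ∉ Q) (hQP : ∀ a ∈ Q, a ∉ P) :
    2 ≤ lam tl hd s v := by
  refine le_csSup (lam_bddAbove tl hd hsv) ?_
  refine ⟨fun i => if i = 0 then P else Q, ?_, ?_⟩
  · intro i
    by_cases h : i = 0
    · simpa [h] using hP
    · simpa [h] using hQ
  · intro i j hij a
    fin_cases i <;> fin_cases j <;> simp_all

/-- `2 ≤ lam` gives two arc-disjoint walks. -/
lemma exists_two_disjoint [Finite B] {s v : V} (hsv : s ≠ v) (h2 : 2 ≤ lam tl hd s v) :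
    ∃ P Q : List B, IsArcWalk tl hd s v P ∧ IsArcWalk tl hd s v Q ∧
      (∀ a ∈ P, a ∉ Q) ∧ (∀ a ∈ Q, a ∉ P) := by
  have hmem : lam tl hd s v ∈ {k | ∃ P : Fin k → List B,
      (∀ i, IsArcWalk tl hd s v (P i)) ∧
      ∀ i j : Fin k, i ≠ j → ∀ a, a ∈ P i → a ∉ P j} := by
    apply Nat.sSup_mem
    · exact ⟨0, Fin.elim0, fun i => i.elim0, fun i => i.elim0⟩
    · exact lam_bddAbove tl hd hsv
  obtain ⟨P, hP, hdisj⟩ := hmem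
  have h0 : (0 : ℕ) < lam tl hd s v := by omega
  have h1 : (1 : ℕ) < lam tl hd s v := by omega
  refine ⟨P ⟨0, h0⟩, P ⟨1, h1⟩, hP _, hP _, ?_, ?_⟩
  · exact hdisj _ _ (by simp [Fin.ext_iff])
  · exact hdisj _ _ (by simp [Fin.ext_iff])

end Lam

section Restrict

variable {tl hd : A → V}

/-- a walk avoiding `e` restricts to the arc-deleted network. -/
lemma walk_restrict (e : A) {u v : V} {p : List A} (hw : IsArcWalk tl hd u v p)
    (hp : ∀ a ∈ p, a ≠ e) :
    ∃ q : List {b : A // b ≠ e},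
      IsArcWalk (fun b => tl b.1) (fun b => hd b.1) u v q ∧ q.map Subtype.val = p := by
  induction p generalizing u with
  | nil => exact ⟨[], hw, rfl⟩
  | cons a p ih =>
    obtain ⟨h1, h2⟩ := hw
    obtain ⟨q, hq1, hq2⟩ := ih h2 (fun x hx => hp x (List.mem_cons_of_mem a hx))
    exact ⟨⟨a, hp a List.mem_cons_self⟩ :: q, ⟨h1, hq1⟩, by simp [hq2]⟩

/-- helper : if two arc-disjoint walks from `s` to `t` avoid `e`, then
`lam` in the `e`-deleted network is at least 2 ; this contradicts two-minimality. -/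
lemma not2 [Finite A] {s t : V} (e : A) (hts : s ≠ t)
    (hlt : lam (fun b : {b : A // b ≠ e} => tl b.1) (fun b => hd b.1) s t < 2)
    (P Q : List A) (hP : IsArcWalk tl hd s t P) (hQ : IsArcWalk tl hd s t Q)
    (hPQ : ∀ a ∈ P, a ∉ Q) (hQP : ∀ a ∈ Q, a ∉ P)
    (heP : e ∉ P) (heQ : e ∉ Q) : False := by
  obtain ⟨P', hP', hPm⟩ := walk_restrict e hP (fun a ha => by rintro rfl; exact heP ha)
  obtain ⟨Q', hQ', hQm⟩ := walk_restrict e hQ (fun a ha => by rintro rfl; exact heQ ha)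
  have mem1 : ∀ x : {b : A // b ≠ e}, x ∈ P' → (x : A) ∈ P := by
    intro x hx; rw [← hPm]; exact List.mem_map_of_mem hx
  have mem2 : ∀ x : {b : A // b ≠ e}, x ∈ Q' → (x : A) ∈ Q := by
    intro x hx; rw [← hQm]; exact List.mem_map_of_mem hx
  have h2 : 2 ≤ lam (fun b : {b : A // b ≠ e} => tl b.1) (fun b => hd b.1) s t := by
    refine two_le_lam _ _ hts P' Q' hP' hQ' ?_ ?_
    · intro a ha ha2; exact hPQ a (mem1 a ha) (mem2 a ha2)
    · intro a ha ha2; exact hQP a (mem2 a ha) (mem1 a ha2)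
  omega

end Restrict

end NCMinor
namespace NCMinor

variable {V A : Type} [Finite A] {tl hd : A → V} {s : V} {T : Set V}

section Structure

variable (hsT : s ∉ T) (hacyc : Acyclic tl hd) (hmin : TwoMinimal tl hd s T)
include hsT hacyc hmin

/-- the source has no incoming arc. -/
lemma no_arc_into_source : ∀ a : A, hd a ≠ s := by
  intro a h
  obtain ⟨t, ht, hlt⟩ := hmin.2 a
  have hst : s ≠ t := fun e => hsT (e ▸ ht)
  obtain ⟨P, Q, hP, hQ, hPQ, hQP⟩ := exists_two_disjoint tl hd hst (hmin.1 t ht)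
  have key : ∀ R : List A, IsArcWalk tl hd s t R → a ∉ R := by
    intro R hR haR
    obtain ⟨X, Y, rfl, h1, h2⟩ := isArcWalk_mem_split tl hd hR haR
    have : IsArcWalk tl hd s s (X ++ [a]) :=
      isArcWalk_append_of tl hd h1 ⟨rfl, h⟩
    simpa using hacyc _ _ this
  exact not2 a hst hlt P Q hP hQ hPQ hQP (key P hP) (key Q hQ)

/-- every arc whose tail is not the source has an arc entering its tail. -/
lemma tail_has_incoming (a : A) (ha : tl a ≠ s) : ∃ c, hd c = tl a := by
  obtain ⟨t, ht, hlt⟩ := hmin.2 a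
  have hst : s ≠ t := fun e => hsT (e ▸ ht)
  obtain ⟨P, Q, hP, hQ, hPQ, hQP⟩ := exists_two_disjoint tl hd hst (hmin.1 t ht)
  have key : ∀ R : List A, IsArcWalk tl hd s t R → a ∈ R → ∃ c, hd c = tl a := by
    intro R hR haR
    obtain ⟨X, Y, rfl, h1, h2⟩ := isArcWalk_mem_split tl hd hR haR
    rcases List.eq_nil_or_concat X with rfl | ⟨X', c, rfl⟩
    · exact absurd h1.symm ha
    · rw [List.concat_eq_append] at h1
      obtain ⟨w, hw1, hw2⟩ := (isArcWalk_append tl hd X' [c]).1 h1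
      obtain ⟨hw3, hw4⟩ := hw2
      exact ⟨c, hw4⟩
  by_cases haP : a ∈ P
  · exact key P hP haP
  by_cases haQ : a ∈ Q
  · exact key Q hQ haQ
  exact absurd (not2 a hst hlt P Q hP hQ hPQ hQP haP haQ) not_false

end Structure

end NCMinor
namespace NCMinor

variable {V A : Type}

section ClassTree

variable (tl hd : A → V)

lemma inDeg_def (v : V) : inDeg hd v = {a | hd a = v}.ncard := rfl

lemma indeg_one_ex [Finite A] {v : V} (h : inDeg hd v = 1) : ∃ c, hd c = v := by
  have : {a | hd a = v}.Nonempty :=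
    Set.nonempty_of_ncard_ne_zero (by rw [inDeg_def] at h; omega)
  obtain ⟨c, hc⟩ := this
  exact ⟨c, hc⟩

lemma indeg_one_unique {v : V} (h : inDeg hd v = 1) {c c' : A}
    (hc : hd c = v) (hc' : hd c' = v) : c = c' := by
  rw [inDeg_def] at h
  obtain ⟨x, hx⟩ := Set.ncard_eq_one.mp h
  have h1 : c ∈ {a | hd a = v} := hc
  have h2 : c' ∈ {a | hd a = v} := hc'
  rw [hx] at h1 h2
  simp only [Set.mem_singleton_iff] at h1 h2
  rw [h1, h2]

lemma indeg_two_of_pair [Finite A] {v : V} {c c' : A} (hne : c ≠ c')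
    (hc : hd c = v) (hc' : hd c' = v) : 2 ≤ inDeg hd v := by
  rw [inDeg_def]
  have hsub : ({c, c'} : Set A) ⊆ {a | hd a = v} := by
    rintro x (rfl | rfl) <;> assumption
  calc 2 = ({c, c'} : Set A).ncard := (Set.ncard_pair hne).symm
    _ ≤ _ := Set.ncard_le_ncard hsub (Set.toFinite _)

open Classical in
/-- a choice of parent arc. -/
noncomputable def par (b : A) : A :=
  if h : ∃ a, hd a = tl b then h.choose else b

lemma par_spec {b : A} (h : ∃ a, hd a = tl b) : hd (par tl hd b) = tl b := by
  rw [par, dif_pos h]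
  exact h.choose_spec

lemma par_eq_of [Finite A] {b c : A} (hb : inDeg hd (tl b) = 1) (hc : hd c = tl b) :
    par tl hd b = c :=
  indeg_one_unique hd hb (par_spec tl hd ⟨c, hc⟩) hc

lemma subtreeRel_par [Finite A] {b : A} (hb : inDeg hd (tl b) = 1) :
    SubtreeRel tl hd (par tl hd b) b := by
  have hp := par_spec tl hd (indeg_one_ex hd hb)
  exact ⟨hp, by rw [hp]; exact hb⟩

variable [Finite A] (hacyc : Acyclic tl hd)

/-- root arc of the subtree containing `b`. -/
noncomputable def root : A → A :=
  (arcLt_wf hacyc).fix (fun b IH =>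
    if h : inDeg hd (tl b) = 1 then IH (par tl hd b) (par_spec tl hd (indeg_one_ex hd h)) else b)

lemma root_eq (b : A) : root tl hd hacyc b =
    if inDeg hd (tl b) = 1 then root tl hd hacyc (par tl hd b) else b := by
  rw [root, WellFounded.fix_eq]
  split_ifs with h <;> rfl

/-- arc chain from the root to `b`. -/
noncomputable def chain : A → List A :=
  (arcLt_wf hacyc).fix (fun b IH =>
    if h : inDeg hd (tl b) = 1
    then IH (par tl hd b) (par_spec tl hd (indeg_one_ex hd h)) ++ [b] else [b])

lemma chain_eq (b : A) : chain tl hd hacyc b =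
    (if inDeg hd (tl b) = 1 then chain tl hd hacyc (par tl hd b) else []) ++ [b] := by
  rw [chain, WellFounded.fix_eq]
  split_ifs with h <;> rfl

lemma root_rel {a b : A} (h : SubtreeRel tl hd a b) :
    root tl hd hacyc a = root tl hd hacyc b := by
  obtain ⟨h1, h2⟩ := h
  have hb : inDeg hd (tl b) = 1 := by rw [← h1]; exact h2
  rw [root_eq tl hd hacyc b, if_pos hb, par_eq_of tl hd hb h1]

lemma root_class (b : A) :
    Quot.mk (SubtreeRel tl hd) (root tl hd hacyc b) = Quot.mk (SubtreeRel tl hd) b := by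
  induction b using (arcLt_wf hacyc).induction with
  | _ b IH =>
    rw [root_eq]
    split_ifs with h
    · rw [IH (par tl hd b) (par_spec tl hd (indeg_one_ex hd h))]
      exact Quot.sound (subtreeRel_par tl hd h)
    · rfl

lemma chain_walk (b : A) :
    IsArcWalk tl hd (tl (root tl hd hacyc b)) (hd b) (chain tl hd hacyc b) := by
  induction b using (arcLt_wf hacyc).induction with
  | _ b IH =>
    rw [chain_eq, root_eq]
    split_ifs with h
    · have hp := par_spec tl hd (indeg_one_ex hd h)
      exact isArcWalk_append_of tl hd (IH (par tl hd b) hp) (by rw [hp]; exact ⟨rfl, rfl⟩)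
    · exact ⟨rfl, rfl⟩

lemma chain_class {b c : A} (hc : c ∈ chain tl hd hacyc b) :
    Quot.mk (SubtreeRel tl hd) c = Quot.mk (SubtreeRel tl hd) b := by
  induction b using (arcLt_wf hacyc).induction with
  | _ b IH =>
    rw [chain_eq] at hc
    rcases List.mem_append.1 hc with h1 | h1
    · split_ifs at h1 with h
      · rw [IH (par tl hd b) (par_spec tl hd (indeg_one_ex hd h)) h1]
        exact Quot.sound (subtreeRel_par tl hd h)
      · simp at h1
    · simp at h1
      rw [h1]

lemma chain_struct {b c : A} (hc : c ∈ chain tl hd hacyc b) :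
    c = b ∨ ∃ d, SubtreeRel tl hd c d := by
  induction b using (arcLt_wf hacyc).induction with
  | _ b IH =>
    rw [chain_eq] at hc
    rcases List.mem_append.1 hc with h1 | h1
    · split_ifs at h1 with h
      · rcases IH (par tl hd b) (par_spec tl hd (indeg_one_ex hd h)) h1 with rfl | h2
        · exact Or.inr ⟨b, subtreeRel_par tl hd h⟩
        · exact Or.inr h2
      · simp at h1
    · simp at h1
      exact Or.inl h1

lemma self_mem_chain (b : A) : b ∈ chain tl hd hacyc b := by
  rw [chain_eq]; simp

lemma root_mem_chain (b : A) : root tl hd hacyc b ∈ chain tl hd hacyc b := by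
  induction b using (arcLt_wf hacyc).induction with
  | _ b IH =>
    rw [chain_eq, root_eq]
    split_ifs with h
    · exact List.mem_append_left _ (IH (par tl hd b) (par_spec tl hd (indeg_one_ex hd h)))
    · simp

/-- walk-ascent : any walk from the source through `b` traverses the whole chain of `b`. -/
lemma walk_ascent {s : V} (hs : ∀ c : A, hd c ≠ s) {t : V} {P : List A} (b : A)
    (hP : IsArcWalk tl hd s t P) (hb : b ∈ P) :
    ∃ X Y, P = X ++ chain tl hd hacyc b ++ Y ∧
      IsArcWalk tl hd s (tl (root tl hd hacyc b)) X ∧ IsArcWalk tl hd (hd b) t Y := by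
  induction b using (arcLt_wf hacyc).induction generalizing t P with
  | _ b IH =>
    obtain ⟨X', Y, rfl, h1, h2⟩ := isArcWalk_mem_split tl hd hP hb
    by_cases h : inDeg hd (tl b) = 1
    · rcases List.eq_nil_or_concat X' with rfl | ⟨X'', c, rfl⟩
      · obtain ⟨c, hc⟩ := indeg_one_ex hd h
        have h1' : s = tl b := h1
        exact absurd (hc.trans h1'.symm) (hs c)
      · rw [List.concat_eq_append] at h1 ⊢
        obtain ⟨w, hw1, hw2⟩ := (isArcWalk_append tl hd X'' [c]).1 h1
        obtain ⟨hw3, hw4⟩ := hw2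
        have hc : hd c = tl b := hw4
        have hpar : par tl hd b = c := par_eq_of tl hd h hc
        obtain ⟨X0, Y0, hsplit, hX0, hY0⟩ := IH c hc h1 (by simp)
        have hY0' : IsArcWalk tl hd (tl b) (tl b) Y0 := by rw [hc] at hY0; exact hY0
        have hY0nil : Y0 = [] := hacyc _ _ hY0'
        subst hY0nil
        refine ⟨X0, Y, ?_, ?_, h2⟩
        · rw [chain_eq, if_pos h, hpar]
          rw [hsplit]
          simp
        · rw [root_eq, if_pos h, hpar]
          exact hX0
    · refine ⟨X', Y, ?_, ?_, h2⟩
      · rw [chain_eq, if_neg h]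
        simp
      · rw [root_eq, if_neg h]
        exact h1

end ClassTree

end NCMinor
namespace NCMinor

variable {V A : Type} [Finite A] {tl hd : A → V} {s : V} {T : Set V}

section M3

variable (hsT : s ∉ T) (hacyc : Acyclic tl hd) (hmin : TwoMinimal tl hd s T)
include hsT hacyc hmin

/-- two distinct arcs with the same head lie in distinct subtrees. -/
lemma distinct_classes {b1 b2 : A} (hne : b1 ≠ b2) (hhd : hd b1 = hd b2) :
    Quot.mk (SubtreeRel tl hd) b1 ≠ Quot.mk (SubtreeRel tl hd) b2 := by
  intro hq
  have hs := no_arc_into_source hsT hacyc hmin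
  obtain ⟨t, ht, hlt⟩ := hmin.2 b2
  have hst : s ≠ t := fun e => hsT (e ▸ ht)
  obtain ⟨P, Q, hP, hQ, hPQ, hQP⟩ := exists_two_disjoint tl hd hst (hmin.1 t ht)
  have hroot : root tl hd hacyc b1 = root tl hd hacyc b2 := by
    have := congrArg (Quot.lift (root tl hd hacyc)
      (fun a b h => root_rel tl hd hacyc h)) hq
    simpa using this
  have hv2 : 2 ≤ inDeg hd (hd b2) := indeg_two_of_pair hd hne hhd rfl
  have hb2nc : b2 ∉ chain tl hd hacyc b1 := by
    intro hmem
    rcases chain_struct tl hd hacyc hmem with h' | ⟨d, hd1, hd2⟩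
    · exact hne h'.symm
    · omega
  have key : ∀ P Q : List A, IsArcWalk tl hd s t P → IsArcWalk tl hd s t Q →
      (∀ a ∈ P, a ∉ Q) → (∀ a ∈ Q, a ∉ P) → b2 ∈ P → False := by
    intro P Q hP hQ hPQ hQP hb2P
    obtain ⟨X, Y, hPeq, hX, hY⟩ := walk_ascent tl hd hacyc hs b2 hP hb2P
    have hP' : IsArcWalk tl hd s t (X ++ (chain tl hd hacyc b1 ++ Y)) := by
      have c1 := chain_walk tl hd hacyc b1
      have c2 : IsArcWalk tl hd (hd b1) t Y := by rw [hhd]; exact hY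
      have c0 : IsArcWalk tl hd s (tl (root tl hd hacyc b1)) X := by rw [hroot]; exact hX
      exact isArcWalk_append_of tl hd c0 (isArcWalk_append_of tl hd c1 c2)
    have hchainQ : ∀ c ∈ chain tl hd hacyc b1, c ∉ Q := by
      intro c hcmem hcQ
      obtain ⟨Xq, Yq, hQeq, _, _⟩ := walk_ascent tl hd hacyc hs c hQ hcQ
      have hrc : root tl hd hacyc c = root tl hd hacyc b1 := by
        have := congrArg (Quot.lift (root tl hd hacyc)
          (fun a b h => root_rel tl hd hacyc h)) (chain_class tl hd hacyc hcmem)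
        simpa using this
      have h1 : root tl hd hacyc c ∈ Q := by
        rw [hQeq]
        exact List.mem_append_left _ (List.mem_append_right _ (root_mem_chain tl hd hacyc c))
      have h2 : root tl hd hacyc b2 ∈ P := by
        rw [hPeq]
        exact List.mem_append_left _ (List.mem_append_right _ (root_mem_chain tl hd hacyc b2))
      rw [hrc, hroot] at h1
      exact hQP _ h1 h2
    obtain ⟨C1, C2, hCeq⟩ := List.append_of_mem (self_mem_chain tl hd hacyc b2)
    have hPeq2 : P = (X ++ C1) ++ b2 :: (C2 ++ Y) := by
      rw [hPeq, hCeq]; simp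
    have hb2X : b2 ∉ X := by
      have := walk_arc_not_mem_left hacyc (hPeq2 ▸ hP)
      intro h'; exact this (List.mem_append_left _ h')
    have hb2Y : b2 ∉ Y := by
      have := walk_arc_not_mem_right hacyc (hPeq2 ▸ hP)
      intro h'; exact this (List.mem_append_right _ h')
    have hmemP : ∀ x : A, x ∈ X ∨ x ∈ Y → x ∈ P := by
      rintro x (h' | h') <;> rw [hPeq]
      · exact List.mem_append_left _ (List.mem_append_left _ h')
      · exact List.mem_append_right _ h'
    have hd1 : ∀ a ∈ X ++ (chain tl hd hacyc b1 ++ Y), a ∉ Q := by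
      intro a ha
      rcases List.mem_append.1 ha with h' | h'
      · exact hPQ a (hmemP a (Or.inl h'))
      · rcases List.mem_append.1 h' with h'' | h''
        · exact hchainQ a h''
        · exact hPQ a (hmemP a (Or.inr h''))
    have hb2P' : b2 ∉ X ++ (chain tl hd hacyc b1 ++ Y) := by
      intro h'
      rcases List.mem_append.1 h' with h'' | h''
      · exact hb2X h''
      rcases List.mem_append.1 h'' with h'' | h''
      · exact hb2nc h''
      · exact hb2Y h''
    exact not2 b2 hst hlt _ Q hP' hQ hd1 (fun a ha h' => hd1 a h' ha) hb2P'
      (hPQ b2 hb2P)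
  by_cases hb2P : b2 ∈ P
  · exact key P Q hP hQ hPQ hQP hb2P
  by_cases hb2Q : b2 ∈ Q
  · exact key Q P hQ hP hQP hPQ hb2Q
  exact not2 b2 hst hlt P Q hP hQ hPQ hQP hb2P hb2Q

end M3

end NCMinor
namespace NCMinor

variable {V A : Type}

section Pick

variable (tl hd : A → V)

open Classical in
/-- a choice of incoming arc for each node. -/
noncomputable def pk (v : V) : Option A :=
  if h : ∃ a, hd a = v then some h.choose else none

lemma pk_spec {v : V} {a : A} (h : pk hd v = some a) : hd a = v := by
  rw [pk] at h
  by_cases h' : ∃ a, hd a = v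
  · rw [dif_pos h'] at h
    cases h
    exact h'.choose_spec
  · rw [dif_neg h'] at h
    cases h

lemma pk_is_some {v : V} (h : ∃ a, hd a = v) : ∃ a, pk hd v = some a ∧ hd a = v := by
  rw [pk, dif_pos h]
  exact ⟨h.choose, rfl, h.choose_spec⟩

lemma pk_eq_of_indeg_one {v : V} {c : A} (h1 : inDeg hd v = 1) (hc : hd c = v) :
    pk hd v = some c := by
  obtain ⟨a, ha1, ha2⟩ := pk_is_some hd ⟨c, hc⟩
  rw [ha1, indeg_one_unique hd h1 ha2 hc]

/-- nodes assigned to a given subtree. -/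
def NB (C : Subtrees tl hd) : Set V :=
  {v | ∃ a, pk hd v = some a ∧ Quot.mk (SubtreeRel tl hd) a = C}

/-- the coloring graph : the picked incoming subtree of a node is adjacent to each other
incoming subtree at that node. -/
def Hgr : SimpleGraph (Subtrees tl hd) where
  Adj C C' := C ≠ C' ∧ ∃ a b : A, pk hd (hd b) = some a ∧
    ((Quot.mk (SubtreeRel tl hd) a = C ∧ Quot.mk (SubtreeRel tl hd) b = C') ∨
     (Quot.mk (SubtreeRel tl hd) a = C' ∧ Quot.mk (SubtreeRel tl hd) b = C))
  symm := by
    constructor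
    rintro C C' ⟨hne, a, b, h1, h2⟩
    exact ⟨hne.symm, a, b, h1, h2.symm⟩
  loopless := by constructor; rintro C ⟨hne, -⟩; exact hne rfl

/-- if an arc has neither parents nor children, its subtree is a singleton. -/
lemma class_singleton {b : A} (hnopar : inDeg hd (tl b) ≠ 1)
    (hnochild : inDeg hd (hd b) ≠ 1) :
    ∀ x : A, Quot.mk (SubtreeRel tl hd) x = Quot.mk (SubtreeRel tl hd) b → x = b := by
  intro x hx
  have h := Quot.eq.1 hx
  have key : ∀ u v : A, Relation.EqvGen (SubtreeRel tl hd) u v → (u = b ↔ v = b) := by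
    intro u v h
    induction h with
    | rel u v h' =>
      constructor
      · rintro rfl
        exact absurd h'.2 hnochild
      · rintro rfl
        exact absurd (h'.1 ▸ h'.2) hnopar
    | refl => exact Iff.rfl
    | symm _ _ _ ih => exact ih.symm
    | trans _ _ _ _ _ ih1 ih2 => exact ih1.trans ih2
  exact (key x b h).2 rfl

/-- any element equivalent to `b` but different from it yields a related pair. -/
lemma eqvGen_pair {r : A → A → Prop} {x y : A} (h : Relation.EqvGen r x y) :
    x = y ∨ ∃ u w, r u w ∧ Relation.EqvGen r x u := by
  induction h with
  | rel u v h' => exact Or.inr ⟨u, v, h', Relation.EqvGen.refl u⟩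
  | refl => exact Or.inl rfl
  | symm u v h' ih =>
    rcases ih with rfl | ⟨a, w, hr, he⟩
    · exact Or.inl rfl
    · exact Or.inr ⟨a, w, hr, (Relation.EqvGen.symm _ _ h').trans _ _ _ he⟩
  | trans u v w h1 h2 ih1 ih2 =>
    rcases ih1 with rfl | ⟨a, c, hr, he⟩
    · exact ih2
    · exact Or.inr ⟨a, c, hr, he⟩

variable [Finite A]

/-- structure of a subtree with no assigned node. -/
lemma nb_empty {C : Subtrees tl hd} (hC : NB tl hd C = ∅) :
    ∃ b a0 : A, Quot.mk (SubtreeRel tl hd) b = C ∧ pk hd (hd b) = some a0 ∧ a0 ≠ b ∧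
      (∀ x : A, Quot.mk (SubtreeRel tl hd) x = C → x = b) ∧
      (∀ X, (Hgr tl hd).Adj C X → X = Quot.mk (SubtreeRel tl hd) a0) ∧
      hd b ∈ NB tl hd (Quot.mk (SubtreeRel tl hd) a0) := by
  obtain ⟨b, rfl⟩ := Quot.exists_rep C
  have hnb : ∀ v : V, v ∉ NB tl hd (Quot.mk (SubtreeRel tl hd) b) := by
    rw [hC]; intro v h; exact h
  -- singleton
  have hsing : ∀ x : A, Quot.mk (SubtreeRel tl hd) x = Quot.mk (SubtreeRel tl hd) b → x = b := by
    intro x hx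
    rcases eqvGen_pair (Quot.eq.1 hx.symm) with h' | ⟨u, w, hr, he⟩
    · exact h'.symm
    · exfalso
      have hu : Quot.mk (SubtreeRel tl hd) u = Quot.mk (SubtreeRel tl hd) b :=
        (Quot.eq.2 he).symm
      have : hd u ∈ NB tl hd (Quot.mk (SubtreeRel tl hd) b) :=
        ⟨u, pk_eq_of_indeg_one hd hr.2 rfl, hu⟩
      exact hnb _ this
  obtain ⟨a0, ha1, ha2⟩ := pk_is_some hd ⟨b, rfl⟩
  have ha0b : a0 ≠ b := by
    intro h
    exact hnb (hd b) ⟨a0, ha1, by rw [h]⟩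
  refine ⟨b, a0, rfl, ha1, ha0b, hsing, ?_, ⟨a0, ha1, rfl⟩⟩
  rintro X ⟨hne, a', b', h1, (⟨h2, h3⟩ | ⟨h2, h3⟩)⟩
  · -- a' in C : impossible
    exfalso
    have he : a' = b := hsing a' h2
    have hh : hd a' = hd b' := pk_spec hd h1
    rw [he] at h1 hh
    rw [← hh, ha1] at h1
    cases h1
    exact ha0b rfl
  · -- b' in C
    have he : b' = b := hsing b' h3
    rw [he, ha1] at h1
    cases h1
    exact h2.symm

end Pick

end NCMinor
namespace NCMinor

variable {V A : Type} [Finite A]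

section Transfer

variable (tl hd : A → V) (hacyc : Acyclic tl hd)

/-- root arc of a subtree. -/
noncomputable def rootQ : Subtrees tl hd → A :=
  Quot.lift (root tl hd hacyc) (fun _ _ h => root_rel tl hd hacyc h)

lemma rootQ_mk (a : A) : rootQ tl hd hacyc (Quot.mk (SubtreeRel tl hd) a) =
    root tl hd hacyc a := rfl

lemma rootnb {a : A} (ha : hd a ∈ NB tl hd (Quot.mk (SubtreeRel tl hd) a)) :
    hd (root tl hd hacyc a) ∈ NB tl hd (Quot.mk (SubtreeRel tl hd) a) := by
  induction a using (arcLt_wf hacyc).induction with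
  | _ a IH =>
    rw [root_eq]
    split_ifs with h
    · have hp := par_spec tl hd (indeg_one_ex hd h)
      have hcl : Quot.mk (SubtreeRel tl hd) (par tl hd a) = Quot.mk (SubtreeRel tl hd) a :=
        Quot.sound (subtreeRel_par tl hd h)
      have hmem : hd (par tl hd a) ∈ NB tl hd (Quot.mk (SubtreeRel tl hd) (par tl hd a)) := by
        refine ⟨par tl hd a, ?_, rfl⟩
        exact pk_eq_of_indeg_one hd (by rw [hp]; exact h) rfl
      have := IH (par tl hd a) hp hmem
      rw [hcl] at this
      exact this
    · exact ha

include hacyc in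
lemma topology_adj_of_arc (b : A) : (topology tl hd).Adj (hd b) (tl b) :=
  ⟨(no_self_loop hacyc b).symm, b, Or.inr ⟨rfl, rfl⟩⟩

lemma reach_eq {W : Type} {G : SimpleGraph W} {x y : W} (h : x = y) : G.Reachable x y := by
  subst h; rfl

lemma climb {S : Set V} {a : A} (ha : hd a ∈ NB tl hd (Quot.mk (SubtreeRel tl hd) a))
    (hS : ∀ w ∈ NB tl hd (Quot.mk (SubtreeRel tl hd) a), w ∈ S) :
    ((topology tl hd).induce S).Reachable ⟨hd a, hS _ ha⟩
      ⟨hd (root tl hd hacyc a), hS _ (rootnb tl hd hacyc ha)⟩ := by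
  induction a using (arcLt_wf hacyc).induction with
  | _ a IH =>
    by_cases h : inDeg hd (tl a) = 1
    · have hp := par_spec tl hd (indeg_one_ex hd h)
      have hcl : Quot.mk (SubtreeRel tl hd) (par tl hd a) = Quot.mk (SubtreeRel tl hd) a :=
        Quot.sound (subtreeRel_par tl hd h)
      have hmem : hd (par tl hd a) ∈ NB tl hd (Quot.mk (SubtreeRel tl hd) (par tl hd a)) := by
        refine ⟨par tl hd a, ?_, rfl⟩
        exact pk_eq_of_indeg_one hd (by rw [hp]; exact h) rfl
      have hS' : ∀ w ∈ NB tl hd (Quot.mk (SubtreeRel tl hd) (par tl hd a)), w ∈ S := by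
        rw [hcl]; exact hS
      have hreach := IH (par tl hd a) hp hmem hS'
      have hroot : root tl hd hacyc a = root tl hd hacyc (par tl hd a) := by
        rw [root_eq tl hd hacyc a, if_pos h]
      have hadj : ((topology tl hd).induce S).Adj ⟨hd a, hS _ ha⟩ ⟨hd (par tl hd a), hS' _ hmem⟩ := by
        have := topology_adj_of_arc tl hd hacyc a
        rw [← hp] at this
        exact this
      have he2 : (⟨hd (root tl hd hacyc (par tl hd a)), hS' _ (rootnb tl hd hacyc hmem)⟩ : S) =
          ⟨hd (root tl hd hacyc a), hS _ (rootnb tl hd hacyc ha)⟩ :=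
        Subtype.ext (congrArg hd hroot.symm)
      exact hadj.reachable.trans (hreach.trans (reach_eq he2))
    · have hr : root tl hd hacyc a = a := by rw [root_eq, if_neg h]
      exact reach_eq (Subtype.ext (congrArg hd hr.symm))

end Transfer

end NCMinor
namespace NCMinor

variable {V A : Type} [Finite A]

section Transfer2

variable (tl hd : A → V) (hacyc : Acyclic tl hd)

lemma hub_mem {C : Subtrees tl hd} (hne : (NB tl hd C).Nonempty) :
    hd (rootQ tl hd hacyc C) ∈ NB tl hd C := by
  obtain ⟨v, a, hpk, hC⟩ := hne
  subst hC
  have hv : hd a = v := pk_spec hd hpk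
  have ha : hd a ∈ NB tl hd (Quot.mk (SubtreeRel tl hd) a) := ⟨a, by rw [hv]; exact hpk, rfl⟩
  exact rootnb tl hd hacyc ha

lemma nb_empty_of_nopar {a b : A} (h1 : pk hd (hd b) = some a)
    (hab : Quot.mk (SubtreeRel tl hd) a ≠ Quot.mk (SubtreeRel tl hd) b)
    (hnopar : inDeg hd (tl b) ≠ 1) : NB tl hd (Quot.mk (SubtreeRel tl hd) b) = ∅ := by
  rw [Set.eq_empty_iff_forall_notMem]
  rintro w ⟨x, hpk, hx⟩
  have aneb : a ≠ b := fun h => hab (by rw [h])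
  have hnochild : inDeg hd (hd b) ≠ 1 := by
    have := indeg_two_of_pair hd aneb (pk_spec hd h1) rfl
    omega
  have hxb : x = b := class_singleton tl hd hnopar hnochild x hx
  subst hxb
  have hw : hd x = w := pk_spec hd hpk
  rw [← hw] at hpk
  rw [h1] at hpk
  cases hpk
  exact aneb rfl

include hacyc in
/-- link across an edge of the coloring graph, oriented case. -/
lemma link_core {S : Set V} {a b : A} (h1 : pk hd (hd b) = some a)
    (hab : Quot.mk (SubtreeRel tl hd) a ≠ Quot.mk (SubtreeRel tl hd) b)
    (hbne : (NB tl hd (Quot.mk (SubtreeRel tl hd) b)).Nonempty)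
    (hSa : ∀ w ∈ NB tl hd (Quot.mk (SubtreeRel tl hd) a), w ∈ S)
    (hSb : ∀ w ∈ NB tl hd (Quot.mk (SubtreeRel tl hd) b), w ∈ S)
    {pa : hd (rootQ tl hd hacyc (Quot.mk (SubtreeRel tl hd) a)) ∈ S}
    {pb : hd (rootQ tl hd hacyc (Quot.mk (SubtreeRel tl hd) b)) ∈ S} :
    ((topology tl hd).induce S).Reachable
      ⟨hd (rootQ tl hd hacyc (Quot.mk (SubtreeRel tl hd) a)), pa⟩
      ⟨hd (rootQ tl hd hacyc (Quot.mk (SubtreeRel tl hd) b)), pb⟩ := by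
  have hvab : hd a = hd b := pk_spec hd h1
  have hpar : inDeg hd (tl b) = 1 := by
    by_contra hpar
    rw [nb_empty_of_nopar tl hd h1 hab hpar] at hbne
    exact Set.not_nonempty_empty hbne
  have hp := par_spec tl hd (indeg_one_ex hd hpar)
  set c := par tl hd b with hc
  have hrel : SubtreeRel tl hd c b := subtreeRel_par tl hd hpar
  have hclc : Quot.mk (SubtreeRel tl hd) c = Quot.mk (SubtreeRel tl hd) b := Quot.sound hrel
  have hmema : hd a ∈ NB tl hd (Quot.mk (SubtreeRel tl hd) a) :=
    ⟨a, by rw [hvab]; exact h1, rfl⟩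
  have hmemc : hd c ∈ NB tl hd (Quot.mk (SubtreeRel tl hd) c) := by
    refine ⟨c, ?_, rfl⟩
    exact pk_eq_of_indeg_one hd (by rw [hp]; exact hpar) rfl
  have hSc : ∀ w ∈ NB tl hd (Quot.mk (SubtreeRel tl hd) c), w ∈ S := by
    rw [hclc]; exact hSb
  -- climb on a
  have r1 := climb tl hd hacyc hmema hSa
  -- climb on c
  have r2 := climb tl hd hacyc hmemc hSc
  -- edge from hd a to tl b = hd c
  have hedge : ((topology tl hd).induce S).Adj ⟨hd a, hSa _ hmema⟩ ⟨hd c, hSc _ hmemc⟩ := by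
    have h' := topology_adj_of_arc tl hd hacyc b
    rw [← hvab, ← hp] at h'
    exact h'
  have e1 : (⟨hd (root tl hd hacyc a), hSa _ (rootnb tl hd hacyc hmema)⟩ : S) =
      ⟨hd (rootQ tl hd hacyc (Quot.mk (SubtreeRel tl hd) a)), pa⟩ := rfl
  have e2 : (⟨hd (root tl hd hacyc c), hSc _ (rootnb tl hd hacyc hmemc)⟩ : S) =
      ⟨hd (rootQ tl hd hacyc (Quot.mk (SubtreeRel tl hd) b)), pb⟩ := by
    refine Subtype.ext ?_
    show hd (root tl hd hacyc c) = hd (rootQ tl hd hacyc (Quot.mk (SubtreeRel tl hd) b))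
    rw [← hclc, rootQ_mk, root_rel tl hd hacyc hrel]
  refine ((reach_eq e1.symm).trans r1.symm).trans ?_
  refine (hedge.reachable).trans ?_
  exact r2.trans (reach_eq e2)

end Transfer2

end NCMinor
namespace NCMinor

variable {V A : Type} [Finite A]

section Transfer3

variable (tl hd : A → V) (hacyc : Acyclic tl hd)

include hacyc in
/-- link across an edge of the coloring graph. -/
lemma link {S : Set V} {C C' : Subtrees tl hd} (hA : (Hgr tl hd).Adj C C')
    (hCne : (NB tl hd C).Nonempty) (hC'ne : (NB tl hd C').Nonempty)
    (hSC : ∀ w ∈ NB tl hd C, w ∈ S) (hSC' : ∀ w ∈ NB tl hd C', w ∈ S)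
    {pa : hd (rootQ tl hd hacyc C) ∈ S} {pb : hd (rootQ tl hd hacyc C') ∈ S} :
    ((topology tl hd).induce S).Reachable
      ⟨hd (rootQ tl hd hacyc C), pa⟩ ⟨hd (rootQ tl hd hacyc C'), pb⟩ := by
  obtain ⟨hne, a, b, h1, (⟨h2, h3⟩ | ⟨h2, h3⟩)⟩ := hA
  · subst h2; subst h3
    exact link_core tl hd hacyc h1 hne hC'ne hSC hSC'
  · subst h2; subst h3
    exact (link_core tl hd hacyc h1 hne.symm hCne hSC' hSC).symm

lemma fin_three {n : ℕ} (hn : 3 ≤ n) (m : Fin n) :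
    ∃ m1 m2 : Fin n, m1 ≠ m2 ∧ m1 ≠ m ∧ m2 ≠ m := by
  have h0 : 0 < n := by omega
  have h1 : 1 < n := by omega
  have h2 : 2 < n := by omega
  by_cases e0 : m = ⟨0, h0⟩
  · exact ⟨⟨1, h1⟩, ⟨2, h2⟩, by simp [Fin.ext_iff], by simp [e0, Fin.ext_iff],
      by simp [e0, Fin.ext_iff]⟩
  by_cases e1 : m = ⟨1, h1⟩
  · exact ⟨⟨0, h0⟩, ⟨2, h2⟩, by simp [Fin.ext_iff], by simp [e1, Fin.ext_iff],
      by simp [e1, Fin.ext_iff]⟩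
  · refine ⟨⟨0, h0⟩, ⟨1, h1⟩, by simp [Fin.ext_iff], ?_, ?_⟩
    · exact fun h => e0 h.symm
    · exact fun h => e1 h.symm

variable {n : ℕ} {B : Fin n → Set (Subtrees tl hd)}

lemma branch_handle (hn : 3 ≤ n)
    (hconn : ∀ m, ((Hgr tl hd).induce (B m)).Connected)
    (hdisj : Pairwise fun m m' => Disjoint (B m) (B m'))
    (hadj : ∀ m m', (⊤ : SimpleGraph (Fin n)).Adj m m' →
      ∃ u ∈ B m, ∃ v ∈ B m', (Hgr tl hd).Adj u v)
    (m : Fin n) {C : Subtrees tl hd} (hC : C ∈ B m) (hE : NB tl hd C = ∅) :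
    ∃ C', C' ∈ B m ∧ (NB tl hd C').Nonempty ∧ ∀ X, (Hgr tl hd).Adj C X → X = C' := by
  obtain ⟨b, a0, hbC, hpk0, hne0, hsing, huniq, hmem0⟩ := nb_empty tl hd hE
  refine ⟨Quot.mk (SubtreeRel tl hd) a0, ?_, ⟨hd b, hmem0⟩, huniq⟩
  by_cases hall : ∀ D ∈ B m, D = C
  · exfalso
    obtain ⟨m1, m2, h12, h1m, h2m⟩ := fin_three hn m
    obtain ⟨u1, hu1, w1, hw1, hA1⟩ := hadj m m1 ((SimpleGraph.top_adj _ _).2 (fun h => h1m h.symm))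
    obtain ⟨u2, hu2, w2, hw2, hA2⟩ := hadj m m2 ((SimpleGraph.top_adj _ _).2 (fun h => h2m h.symm))
    rw [hall u1 hu1] at hA1
    rw [hall u2 hu2] at hA2
    rw [huniq w1 hA1] at hw1
    rw [huniq w2 hA2] at hw2
    exact Set.disjoint_left.mp (hdisj h12) hw1 hw2
  · push_neg at hall
    obtain ⟨D, hD, hDC⟩ := hall
    obtain ⟨w⟩ := (hconn m).preconnected ⟨C, hC⟩ ⟨D, hD⟩
    cases w with
    | nil => exact absurd rfl hDC
    | cons h p =>
      rename_i Y
      have hadj' : (Hgr tl hd).Adj C Y.1 := h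
      rw [← huniq Y.1 hadj']
      exact Y.2

end Transfer3

end NCMinor
namespace NCMinor

variable {V A : Type} [Finite A]

section Transfer4

variable (tl hd : A → V) (hacyc : Acyclic tl hd)

variable {n : ℕ}

/-- the branch sets in the topology induced by branch sets of subtrees. -/
def BV (B : Fin n → Set (Subtrees tl hd)) (m : Fin n) : Set V :=
  {v | ∃ C ∈ B m, v ∈ NB tl hd C}

variable {B : Fin n → Set (Subtrees tl hd)}

lemma nb_sub_BV {m : Fin n} {C : Subtrees tl hd} (hC : C ∈ B m) :
    ∀ w ∈ NB tl hd C, w ∈ BV tl hd B m := fun w hw => ⟨C, hC, hw⟩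

lemma walk_hub (hn : 3 ≤ n)
    (hconn : ∀ m, ((Hgr tl hd).induce (B m)).Connected)
    (hdisj : Pairwise fun m m' => Disjoint (B m) (B m'))
    (hadj : ∀ m m', (⊤ : SimpleGraph (Fin n)).Adj m m' →
      ∃ u ∈ B m, ∃ v ∈ B m', (Hgr tl hd).Adj u v)
    (m : Fin n) (k : ℕ) :
    ∀ (Cx Cy : ↥(B m)) (w : ((Hgr tl hd).induce (B m)).Walk Cx Cy),
      w.length ≤ k → ∀ (hx : (NB tl hd Cx.1).Nonempty) (hy : (NB tl hd Cy.1).Nonempty),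
      ((topology tl hd).induce (BV tl hd B m)).Reachable
        ⟨hd (rootQ tl hd hacyc Cx.1), nb_sub_BV tl hd Cx.2 _ (hub_mem tl hd hacyc hx)⟩
        ⟨hd (rootQ tl hd hacyc Cy.1), nb_sub_BV tl hd Cy.2 _ (hub_mem tl hd hacyc hy)⟩ := by
  induction k with
  | zero =>
    intro Cx Cy w hlen hx hy
    cases w with
    | nil => exact reach_eq rfl
    | cons h p => simp at hlen
  | succ k IH =>
    intro Cx Cy w hlen hx hy
    cases w with
    | nil => exact reach_eq rfl
    | cons h p =>
      rename_i Y
      by_cases hYne : (NB tl hd Y.1).Nonempty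
      · have r1 := link tl hd hacyc (h : (Hgr tl hd).Adj Cx.1 Y.1) hx hYne
          (nb_sub_BV tl hd Cx.2) (nb_sub_BV tl hd Y.2)
          (pa := nb_sub_BV tl hd Cx.2 _ (hub_mem tl hd hacyc hx))
          (pb := nb_sub_BV tl hd Y.2 _ (hub_mem tl hd hacyc hYne))
        have hlen' : p.length ≤ k := by
          simp only [SimpleGraph.Walk.length_cons] at hlen
          omega
        exact r1.trans (IH Y Cy p hlen' hYne hy)
      · have hE : NB tl hd Y.1 = ∅ := Set.not_nonempty_iff_eq_empty.mp hYne
        obtain ⟨C', hC'm, hC'ne, huniq⟩ := branch_handle tl hd hn hconn hdisj hadj m Y.2 hE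
        have hCx : Cx.1 = C' := huniq Cx.1 ((h : (Hgr tl hd).Adj Cx.1 Y.1).symm)
        cases p with
        | nil => exact absurd hy hYne
        | cons h2 p2 =>
          rename_i Z
          have hZ : Z = Cx := Subtype.ext (by rw [huniq Z.1 (h2 : (Hgr tl hd).Adj Y.1 Z.1), hCx])
          subst hZ
          have hlen' : p2.length ≤ k := by
            simp only [SimpleGraph.Walk.length_cons] at hlen
            omega
          exact IH Z Cy p2 hlen' hx hy

include hacyc in
lemma hgr_minor_transfer (hn : 3 ≤ n)
    (h : IsMinor (⊤ : SimpleGraph (Fin n)) (Hgr tl hd)) :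
    IsMinor (⊤ : SimpleGraph (Fin n)) (topology tl hd) := by
  obtain ⟨B, hconn, hdisj, hadj⟩ := h
  refine ⟨BV tl hd B, ?_, ?_, ?_⟩
  · -- connectivity
    intro m
    rw [SimpleGraph.connected_iff]
    constructor
    · -- preconnected
      rintro ⟨x, hx⟩ ⟨y, hy⟩
      obtain ⟨Cx, hCxm, ax, hpkx, haxC⟩ := hx
      obtain ⟨Cy, hCym, ay, hpky, hayC⟩ := hy
      have hxv : hd ax = x := pk_spec hd hpkx
      have hyv : hd ay = y := pk_spec hd hpky
      have hmx : hd ax ∈ NB tl hd (Quot.mk (SubtreeRel tl hd) ax) :=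
        ⟨ax, by rw [hxv]; exact hpkx, rfl⟩
      have hmy : hd ay ∈ NB tl hd (Quot.mk (SubtreeRel tl hd) ay) :=
        ⟨ay, by rw [hyv]; exact hpky, rfl⟩
      have hSx : ∀ w ∈ NB tl hd (Quot.mk (SubtreeRel tl hd) ax), w ∈ BV tl hd B m := by
        rw [haxC]; exact nb_sub_BV tl hd hCxm
      have hSy : ∀ w ∈ NB tl hd (Quot.mk (SubtreeRel tl hd) ay), w ∈ BV tl hd B m := by
        rw [hayC]; exact nb_sub_BV tl hd hCym
      have rx := climb tl hd hacyc hmx hSx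
      have ry := climb tl hd hacyc hmy hSy
      have hCxne : (NB tl hd Cx).Nonempty := ⟨x, ax, hpkx, haxC⟩
      have hCyne : (NB tl hd Cy).Nonempty := ⟨y, ay, hpky, hayC⟩
      obtain ⟨w⟩ := (hconn m).preconnected ⟨Cx, hCxm⟩ ⟨Cy, hCym⟩
      have rmid := walk_hub tl hd hacyc hn hconn hdisj hadj m w.length
        ⟨Cx, hCxm⟩ ⟨Cy, hCym⟩ w le_rfl hCxne hCyne
      have e1 : (⟨x, ⟨Cx, hCxm, ax, hpkx, haxC⟩⟩ : BV tl hd B m) = ⟨hd ax, hSx _ hmx⟩ :=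
        Subtype.ext hxv.symm
      have e2 : (⟨hd (root tl hd hacyc ax), hSx _ (rootnb tl hd hacyc hmx)⟩ : BV tl hd B m) =
          ⟨hd (rootQ tl hd hacyc Cx), nb_sub_BV tl hd hCxm _ (hub_mem tl hd hacyc hCxne)⟩ :=
        Subtype.ext (congrArg hd (by rw [← haxC, rootQ_mk]))
      have e3 : (⟨hd (rootQ tl hd hacyc Cy), nb_sub_BV tl hd hCym _ (hub_mem tl hd hacyc hCyne)⟩ :
          BV tl hd B m) = ⟨hd (root tl hd hacyc ay), hSy _ (rootnb tl hd hacyc hmy)⟩ :=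
        Subtype.ext (congrArg hd (by rw [← hayC, rootQ_mk]))
      have e4 : (⟨hd ay, hSy _ hmy⟩ : BV tl hd B m) = ⟨y, ⟨Cy, hCym, ay, hpky, hayC⟩⟩ :=
        Subtype.ext hyv
      exact ((((((reach_eq e1).trans rx).trans (reach_eq e2)).trans rmid).trans
        (reach_eq e3)).trans ry.symm).trans (reach_eq e4)
    · -- nonempty
      obtain ⟨⟨C, hC⟩⟩ := (hconn m).nonempty
      by_cases hne : (NB tl hd C).Nonempty
      · obtain ⟨v, hv⟩ := hne
        exact ⟨v, C, hC, hv⟩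
      · obtain ⟨C', hC'm, ⟨v, hv⟩, _⟩ := branch_handle tl hd hn hconn hdisj hadj m hC
          (Set.not_nonempty_iff_eq_empty.mp hne)
        exact ⟨v, C', hC'm, hv⟩
  · -- disjointness
    intro m m' hmm'
    rw [Set.disjoint_left]
    rintro v ⟨C, hC, a, hpk, hCa⟩ ⟨C', hC', a', hpk', hCa'⟩
    rw [hpk] at hpk'
    cases hpk'
    rw [hCa] at hCa'
    subst hCa'
    exact Set.disjoint_left.mp (hdisj hmm') hC hC'
  · -- adjacency
    intro m m' hmm'
    obtain ⟨C, hCm, C'', hC''m, hA⟩ := hadj m m' hmm'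
    have hA' := hA
    obtain ⟨hne, a, b, h1, hcase⟩ := hA'
    rcases hcase with ⟨h2, h3⟩ | ⟨h2, h3⟩
    · by_cases hpar : inDeg hd (tl b) = 1
      · have hp := par_spec tl hd (indeg_one_ex hd hpar)
        have hmem1 : hd b ∈ NB tl hd C := ⟨a, h1, h2⟩
        have hmem2 : tl b ∈ NB tl hd C'' := by
          refine ⟨par tl hd b, ?_, ?_⟩
          · rw [← hp]
            exact pk_eq_of_indeg_one hd (by rw [hp]; exact hpar) rfl
          · rw [Quot.sound (subtreeRel_par tl hd hpar)]
            exact h3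
        exact ⟨hd b, ⟨C, hCm, hmem1⟩, tl b, ⟨C'', hC''m, hmem2⟩,
          topology_adj_of_arc tl hd hacyc b⟩
      · exfalso
        have hE : NB tl hd C'' = ∅ := by
          rw [← h3]
          exact nb_empty_of_nopar tl hd h1 (by rw [h2, h3]; exact hne) hpar
        obtain ⟨C', hC'm', hC'ne, huniq⟩ :=
          branch_handle tl hd hn hconn hdisj hadj m' hC''m hE
        have : C = C' := huniq C hA.symm
        subst this
        exact Set.disjoint_left.mp (hdisj hmm') hCm hC'm'
    · by_cases hpar : inDeg hd (tl b) = 1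
      · have hp := par_spec tl hd (indeg_one_ex hd hpar)
        have hmem1 : hd b ∈ NB tl hd C'' := ⟨a, h1, h2⟩
        have hmem2 : tl b ∈ NB tl hd C := by
          refine ⟨par tl hd b, ?_, ?_⟩
          · rw [← hp]
            exact pk_eq_of_indeg_one hd (by rw [hp]; exact hpar) rfl
          · rw [Quot.sound (subtreeRel_par tl hd hpar)]
            exact h3
        exact ⟨tl b, ⟨C, hCm, hmem2⟩, hd b, ⟨C'', hC''m, hmem1⟩,
          (topology_adj_of_arc tl hd hacyc b).symm⟩
      · exfalso
        have hE : NB tl hd C = ∅ := by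
          rw [← h3]
          exact nb_empty_of_nopar tl hd h1 (by rw [h2, h3]; exact hne.symm) hpar
        obtain ⟨C', hC'm, hC'ne, huniq⟩ :=
          branch_handle tl hd hn hconn hdisj hadj m hCm hE
        have : C'' = C' := huniq C'' hA
        subst this
        exact Set.disjoint_left.mp (hdisj hmm') hC'm hC''m

end Transfer4

end NCMinor
namespace NCMinor

section Vectors

variable {F : Type} [Field F]

lemma span_pair_top {x y : F × F} (h : x.1 * y.2 - x.2 * y.1 ≠ 0) :
    Submodule.span F ({x, y} : Set (F × F)) = ⊤ := by
  rw [eq_top_iff]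
  rintro z -
  rw [Submodule.mem_span_pair]
  refine ⟨(z.1 * y.2 - z.2 * y.1) / (x.1 * y.2 - x.2 * y.1),
    (x.1 * z.2 - x.2 * z.1) / (x.1 * y.2 - x.2 * y.1), ?_⟩
  have hx : x = (x.1, x.2) := rfl
  have hy : y = (y.1, y.2) := rfl
  have hz : z = (z.1, z.2) := rfl
  rw [hx, hy, hz]
  simp only [Prod.smul_mk, Prod.mk_add_mk, smul_eq_mul, Prod.mk.injEq]
  constructor <;> rw [div_mul_eq_mul_div, div_mul_eq_mul_div, ← add_div, div_eq_iff h] <;> ring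

variable {q : ℕ}

/-- the `q+1` projective coding vectors. -/
noncomputable def vec (e : Fin q ≃ F) (i : Fin (q + 1)) : F × F :=
  if h : (i : ℕ) < q then (1, e ⟨i, h⟩) else (0, 1)

lemma vec_ne_zero (e : Fin q ≃ F) (i : Fin (q + 1)) : vec e i ≠ 0 := by
  rw [vec]
  split_ifs with h <;> simp [Prod.ext_iff]

lemma vec_indep (e : Fin q ≃ F) {i j : Fin (q + 1)} (hij : i ≠ j) :
    (vec e i).1 * (vec e j).2 - (vec e i).2 * (vec e j).1 ≠ 0 := by
  rw [vec, vec]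
  split_ifs with h1 h2 h2
  · simp only
    have hne : e ⟨(i : ℕ), h1⟩ ≠ e ⟨(j : ℕ), h2⟩ := by
      intro hcon
      apply hij
      have := e.injective hcon
      rw [Fin.mk.injEq] at this
      exact Fin.ext this
    simp only [one_mul, mul_one]
    intro hcon
    exact hne (by linear_combination -hcon)
  · simp
  · simp
  · exfalso
    apply hij
    have := i.isLt
    have := j.isLt
    apply Fin.ext
    omega

end Vectors

end NCMinor

namespace NCMinor

/-- Theorem 4: the Hadwiger Conjecture at `q + 2` implies the
NC-Minor Conjecture for the prime power `q` (realized by the finite field `F` with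
`q` elements). -/
theorem NCMinor_of_hadwiger
    (q : ℕ) (F : Type) [Field F] [Fintype F] (hF : Fintype.card F = q)
    (hHadwiger : ∀ (W : Type) [Fintype W] (H : SimpleGraph W),
      ¬ IsMinor (⊤ : SimpleGraph (Fin (q + 2))) H → H.Colorable (q + 1))
    {V A : Type} [Fintype V] [Fintype A] (tl hd : A → V) (s : V) (T : Set V)
    (hsT : s ∉ T) (hacyc : Acyclic tl hd) (hmin : TwoMinimal tl hd s T)
    (hfree : ¬ IsMinor (⊤ : SimpleGraph (Fin (q + 2))) (topology tl hd)) :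
    ∃ φ : A → F × F, IsCodingSolution tl hd s T φ := by
  classical
  have hq1 : 1 ≤ q := by
    rw [← hF]
    exact Fintype.card_pos
  set e : Fin q ≃ F := (Fintype.equivFinOfCardEq hF).symm with he
  -- the coloring graph has no K_{q+2} minor
  have hnm : ¬ IsMinor (⊤ : SimpleGraph (Fin (q + 2))) (Hgr tl hd) := by
    intro hm
    exact hfree (hgr_minor_transfer tl hd hacyc (by omega) hm)
  haveI : Finite (Subtrees tl hd) := Quot.finite (SubtreeRel tl hd)
  letI : Fintype (Subtrees tl hd) := Fintype.ofFinite _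
  obtain ⟨col⟩ := hHadwiger (Subtrees tl hd) (Hgr tl hd) hnm
  -- the coding function
  refine ⟨fun a => vec e (col (Quot.mk (SubtreeRel tl hd) a)), ?_, ?_, ?_⟩
  · intro a
    exact vec_ne_zero e _
  · -- local coding condition
    intro a ha
    obtain ⟨c0, hc0⟩ := tail_has_incoming hsT hacyc hmin a ha
    by_cases h1 : inDeg hd (tl a) = 1
    · have hrel : SubtreeRel tl hd c0 a := ⟨hc0, by rw [hc0]; exact h1⟩
      have heq : Quot.mk (SubtreeRel tl hd) c0 = Quot.mk (SubtreeRel tl hd) a :=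
        Quot.sound hrel
      show vec e (col (Quot.mk (SubtreeRel tl hd) a)) ∈ Submodule.span F
        ((fun a => vec e (col (Quot.mk (SubtreeRel tl hd) a))) '' {b | hd b = tl a})
      rw [← heq]
      exact Submodule.subset_span ⟨c0, hc0, rfl⟩
    · have h2 : 2 ≤ inDeg hd (tl a) := by
        have hpos : 0 < inDeg hd (tl a) := by
          rw [inDeg_def]
          rw [Set.ncard_pos (Set.toFinite _)]
          exact ⟨c0, hc0⟩
        omega
      obtain ⟨c, hpkc, hc⟩ := pk_is_some hd ⟨c0, hc0⟩
      obtain ⟨b, hb, hbc⟩ := Set.exists_ne_of_one_lt_ncard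
        (by rw [← inDeg_def hd (tl a)]; omega) c
      have hbmem : hd b = tl a := hb
      have hne : Quot.mk (SubtreeRel tl hd) c ≠ Quot.mk (SubtreeRel tl hd) b :=
        distinct_classes hsT hacyc hmin (fun h' => hbc h'.symm) (by rw [hc, hbmem])
      have hAdj : (Hgr tl hd).Adj (Quot.mk (SubtreeRel tl hd) c) (Quot.mk (SubtreeRel tl hd) b) := by
        refine ⟨hne, c, b, ?_, Or.inl ⟨rfl, rfl⟩⟩
        rw [hbmem]
        exact hpkc
      have hcolne : col (Quot.mk (SubtreeRel tl hd) c) ≠ col (Quot.mk (SubtreeRel tl hd) b) :=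
        col.valid hAdj
      have hspan : Submodule.span F
          ({vec e (col (Quot.mk (SubtreeRel tl hd) c)),
            vec e (col (Quot.mk (SubtreeRel tl hd) b))} : Set (F × F)) = ⊤ :=
        span_pair_top (vec_indep e hcolne)
      have hsub : ({vec e (col (Quot.mk (SubtreeRel tl hd) c)),
            vec e (col (Quot.mk (SubtreeRel tl hd) b))} : Set (F × F)) ⊆
          (fun a => vec e (col (Quot.mk (SubtreeRel tl hd) a))) '' {x | hd x = tl a} := by
        rintro z (rfl | rfl)
        · exact ⟨c, hc, rfl⟩
        · exact ⟨b, hbmem, rfl⟩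
      have htop : Submodule.span F
          ((fun a => vec e (col (Quot.mk (SubtreeRel tl hd) a))) '' {x | hd x = tl a}) = ⊤ :=
        top_unique (hspan.ge.trans (Submodule.span_mono hsub))
      rw [htop]
      exact Submodule.mem_top
  · -- full rank at receivers
    intro t ht
    have hst : s ≠ t := fun e' => hsT (e' ▸ ht)
    obtain ⟨P, Q, hP, hQ, hPQ, hQP⟩ := exists_two_disjoint tl hd hst (hmin.1 t ht)
    have hlast : ∀ R : List A, IsArcWalk tl hd s t R → R ≠ [] → ∃ x ∈ R, hd x = t := by
      intro R hR hRne
      rcases List.eq_nil_or_concat R with rfl | ⟨R', x, rfl⟩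
      · exact absurd rfl hRne
      · rw [List.concat_eq_append] at hR ⊢
        obtain ⟨w, hw1, hw2⟩ := (isArcWalk_append tl hd R' [x]).1 hR
        obtain ⟨hw3, hw4⟩ := hw2
        exact ⟨x, by simp, hw4⟩
    obtain ⟨x, hxP, hx⟩ := hlast P hP (by rintro rfl; exact hst hP)
    obtain ⟨y, hyQ, hy⟩ := hlast Q hQ (by rintro rfl; exact hst hQ)
    have hxy : x ≠ y := by
      rintro rfl
      exact hPQ x hxP hyQ
    have h2 : 2 ≤ inDeg hd t := indeg_two_of_pair hd hxy hx hy
    obtain ⟨c, hpkc, hc⟩ := pk_is_some hd ⟨x, hx⟩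
    obtain ⟨b, hb, hbc⟩ := Set.exists_ne_of_one_lt_ncard
      (by rw [← inDeg_def hd t]; omega) c
    have hbmem : hd b = t := hb
    have hne : Quot.mk (SubtreeRel tl hd) c ≠ Quot.mk (SubtreeRel tl hd) b :=
      distinct_classes hsT hacyc hmin (fun h' => hbc h'.symm) (by rw [hc, hbmem])
    have hAdj : (Hgr tl hd).Adj (Quot.mk (SubtreeRel tl hd) c) (Quot.mk (SubtreeRel tl hd) b) := by
      refine ⟨hne, c, b, ?_, Or.inl ⟨rfl, rfl⟩⟩
      rw [hbmem]
      exact hpkc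
    have hcolne : col (Quot.mk (SubtreeRel tl hd) c) ≠ col (Quot.mk (SubtreeRel tl hd) b) :=
      col.valid hAdj
    have hspan : Submodule.span F
        ({vec e (col (Quot.mk (SubtreeRel tl hd) c)),
          vec e (col (Quot.mk (SubtreeRel tl hd) b))} : Set (F × F)) = ⊤ :=
      span_pair_top (vec_indep e hcolne)
    have hsub : ({vec e (col (Quot.mk (SubtreeRel tl hd) c)),
          vec e (col (Quot.mk (SubtreeRel tl hd) b))} : Set (F × F)) ⊆
        (fun a => vec e (col (Quot.mk (SubtreeRel tl hd) a))) '' {x | hd x = t} := by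
      rintro z (rfl | rfl)
      · exact ⟨c, hc, rfl⟩
      · exact ⟨b, hbmem, rfl⟩
    exact top_unique (hspan.ge.trans (Submodule.span_mono hsub))

end NCMinor
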